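/- Let T be a rooted tree with n leaves and write det(xI − C(T)) = Σ_{k=0}^{n} (−1)^k γ_k(T) x^{n−k} for the characteristic polynomial of its ancestral matrix. Then γ_k(T) equals the number of collections of upward paths, one starting at each leaf and pairwise edge-disjoint, in which exactly k of the paths are non-trivial. Consequently, det(I + C(T)) equals the total number of edge-disjoint collections of upward paths in T. -/

import Mathlib

open Matrix

/-- A rooted tree on a finite vertex type `V`, encoded by its root and the
parent function: the root is its own parent, and iterating the parent function
from any vertex eventually reaches the root.  (These conditions force the graph
whose edges join each non-root vertex to its parent to be a tree.) -/
structure TreeOn (V : Type) [Fintype V] [DecidableEq V] where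
  root : V
  parent : V → V
  parent_root : parent root = root
  reaches : ∀ v, ∃ k, parent^[k] v = root

namespace TreeOn

variable {V : Type} [Fintype V] [DecidableEq V]

/-- `u` is a (weak) ancestor of `v`: some iterate of the parent function sends
`v` to `u`.  (Any ancestor is reached within `Fintype.card V` steps, so the
bound makes the predicate decidable without changing its meaning.) -/
def IsAncestor (T : TreeOn V) (u v : V) : Prop :=
  ∃ k, k ≤ Fintype.card V ∧ T.parent^[k] v = u

instance (T : TreeOn V) (u v : V) : Decidable (T.IsAncestor u v) := by
  have h : T.IsAncestor u v ↔ ∃ k ∈ Finset.range (Fintype.card V + 1), T.parent^[k] v = u := by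
    simp [IsAncestor, Nat.lt_succ_iff]
  rw [h]; infer_instance

/-- The level of a vertex: its distance to the root. -/
def level (T : TreeOn V) (v : V) : ℕ := Nat.find (T.reaches v)

/-- The ancestral level `ℓ(v ∨ w)`: the level of the lowest common ancestor
of `v` and `w`, i.e. the greatest level of a common ancestor. -/
def lcaLevel (T : TreeOn V) (v w : V) : ℕ :=
  (Finset.univ.filter fun u => T.IsAncestor u v ∧ T.IsAncestor u w).sup T.level

/-- A leaf is a vertex with no children. -/
def IsLeaf (T : TreeOn V) (v : V) : Prop := ∀ u, T.parent u = v → u = v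

instance (T : TreeOn V) : DecidablePred T.IsLeaf := fun v =>
  inferInstanceAs (Decidable (∀ u, T.parent u = v → u = v))

/-- The type of leaves of `T`. -/
abbrev Leaf (T : TreeOn V) := {v : V // T.IsLeaf v}

/-- The ancestral matrix `C(T)`, indexed by the leaves of `T`, whose
`(v, w)` entry is the ancestral level `ℓ(v ∨ w)`. -/
noncomputable def ancMatrix (T : TreeOn V) : Matrix T.Leaf T.Leaf ℝ :=
  Matrix.of fun v w => (T.lcaLevel v.1 w.1 : ℝ)

/-- The ancestral spectral radius `ρ_C(T)`: the largest eigenvalue of `C(T)`. -/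
noncomputable def rhoC (T : TreeOn V) : ℝ :=
  sSup {μ : ℝ | ∃ x : T.Leaf → ℝ, x ≠ 0 ∧ T.ancMatrix.mulVec x = μ • x}

/-- The underlying simple graph of the tree: each non-root vertex is joined
to its parent. -/
def graph (T : TreeOn V) : SimpleGraph V :=
  SimpleGraph.fromRel fun u v => T.parent u = v ∧ u ≠ v

/-- The number of children (outdegree) of a vertex. -/
def childCount (T : TreeOn V) (v : V) : ℕ :=
  (Finset.univ.filter fun u => T.parent u = v ∧ u ≠ v).card

end TreeOn

namespace TreeOn

variable {V : Type} [Fintype V] [DecidableEq V]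

/-- An edge-disjoint collection of upward paths: for each leaf `v` a choice of
an upward path starting at `v` (encoded by its number of edges, at most the
level of `v`; the path of length `j` uses the edges whose lower endpoints are
`v, parent v, …, parent^[j−1] v`), such that the chosen paths are pairwise
edge-disjoint. -/
def EDColl (T : TreeOn V) : Type :=
  { P : ∀ v : T.Leaf, Fin (T.level v.1 + 1) //
    ∀ v w : T.Leaf, v ≠ w → ∀ i < (P v).1, ∀ j < (P w).1,
      T.parent^[i] v.1 ≠ T.parent^[j] w.1 }

end TreeOn
namespace AncAux

open Finset Function

variable {V : Type} [Fintype V] [DecidableEq V] (T : TreeOn V)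

lemma iterate_root (k : ℕ) : T.parent^[k] T.root = T.root := by
  induction k with
  | zero => rfl
  | succ n ih => rw [Function.iterate_succ_apply', ih, T.parent_root]

lemma iterate_level (v : V) : T.parent^[T.level v] v = T.root := Nat.find_spec (T.reaches v)

lemma level_min {v : V} {k : ℕ} (h : k < T.level v) : T.parent^[k] v ≠ T.root :=
  Nat.find_min (T.reaches v) h

lemma level_root : T.level T.root = 0 :=
  Nat.le_zero.mp (Nat.find_le (by rfl))

lemma level_eq_zero_iff {v : V} : T.level v = 0 ↔ v = T.root := by
  constructor
  · intro h
    have := iterate_level T v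
    rwa [h] at this
  · rintro rfl; exact level_root T

lemma iterate_of_level_le {v : V} {k : ℕ} (h : T.level v ≤ k) : T.parent^[k] v = T.root := by
  have : k = (k - T.level v) + T.level v := by omega
  rw [this, Function.iterate_add_apply, iterate_level, iterate_root]

lemma level_iterate {v : V} {k : ℕ} (h : k ≤ T.level v) :
    T.level (T.parent^[k] v) = T.level v - k := by
  have h1 : T.parent^[T.level v - k] (T.parent^[k] v) = T.root := by
    rw [← Function.iterate_add_apply]
    have : T.level v - k + k = T.level v := by omega
    rw [this, iterate_level]
  have h2 : T.level (T.parent^[k] v) ≤ T.level v - k := Nat.find_le h1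
  rcases Nat.lt_or_ge (T.level (T.parent^[k] v)) (T.level v - k) with hlt | hge
  · exfalso
    have h3 := iterate_level T (T.parent^[k] v)
    rw [← Function.iterate_add_apply] at h3
    exact level_min T (by omega : T.level (T.parent^[k] v) + k < T.level v) h3
  · omega

lemma level_lt_card (v : V) : T.level v < Fintype.card V := by
  have hinj : Function.Injective (fun k : Fin (T.level v + 1) => T.parent^[(k : ℕ)] v) := by
    intro a b hab
    have ha := level_iterate T (Nat.lt_succ_iff.mp a.2)
    have hb := level_iterate T (Nat.lt_succ_iff.mp b.2)
    simp only at hab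
    rw [hab] at ha
    have : (a : ℕ) = (b : ℕ) := by
      have ha2 := Nat.lt_succ_iff.mp a.2
      have hb2 := Nat.lt_succ_iff.mp b.2
      omega
    exact Fin.ext this
  have := Fintype.card_le_of_injective _ hinj
  simpa using this

lemma isAncestor_iff {u v : V} : T.IsAncestor u v ↔ ∃ k, T.parent^[k] v = u := by
  constructor
  · rintro ⟨k, _, hk⟩; exact ⟨k, hk⟩
  · rintro ⟨k, hk⟩
    rcases le_or_gt k (T.level v) with h | h
    · exact ⟨k, le_trans h (le_of_lt (level_lt_card T v)), hk⟩
    · refine ⟨T.level v, le_of_lt (level_lt_card T v), ?_⟩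
      rw [iterate_level]
      rw [iterate_of_level_le T (le_of_lt h)] at hk
      exact hk

lemma isAncestor_iff_le {u v : V} :
    T.IsAncestor u v ↔ ∃ k ≤ T.level v, T.parent^[k] v = u := by
  rw [isAncestor_iff]
  constructor
  · rintro ⟨k, hk⟩
    rcases le_or_gt k (T.level v) with h | h
    · exact ⟨k, h, hk⟩
    · refine ⟨T.level v, le_rfl, ?_⟩
      rw [iterate_level]
      rw [iterate_of_level_le T (le_of_lt h)] at hk
      exact hk
  · rintro ⟨k, _, hk⟩; exact ⟨k, hk⟩

lemma isAncestor_refl (v : V) : T.IsAncestor v v :=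
  (isAncestor_iff T).mpr ⟨0, rfl⟩

lemma isAncestor_root (v : V) : T.IsAncestor T.root v :=
  (isAncestor_iff T).mpr ⟨T.level v, iterate_level T v⟩

lemma isAncestor_trans {u w v : V} (h1 : T.IsAncestor u w) (h2 : T.IsAncestor w v) :
    T.IsAncestor u v := by
  rw [isAncestor_iff] at *
  obtain ⟨a, ha⟩ := h1
  obtain ⟨b, hb⟩ := h2
  exact ⟨a + b, by rw [Function.iterate_add_apply, hb, ha]⟩

lemma level_le_of_isAncestor {u v : V} (h : T.IsAncestor u v) : T.level u ≤ T.level v := by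
  obtain ⟨k, hk, h⟩ := (isAncestor_iff_le T).mp h
  rw [← h, level_iterate T hk]
  omega

lemma eq_of_isAncestor_of_level_le {u v : V} (h : T.IsAncestor u v)
    (hl : T.level v ≤ T.level u) : u = v := by
  obtain ⟨k, hk, h⟩ := (isAncestor_iff_le T).mp h
  have := level_iterate T hk
  rw [h] at this
  have : k = 0 := by omega
  rw [this] at h
  exact h.symm

lemma isAncestor_comparable {u u' v : V} (h : T.IsAncestor u v) (h' : T.IsAncestor u' v) :
    T.IsAncestor u u' ∨ T.IsAncestor u' u := by
  obtain ⟨k, hk, h⟩ := (isAncestor_iff_le T).mp h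
  obtain ⟨k', hk', h'⟩ := (isAncestor_iff_le T).mp h'
  rcases le_or_gt k k' with hle | hlt
  · right
    refine (isAncestor_iff T).mpr ⟨k' - k, ?_⟩
    rw [← h, ← Function.iterate_add_apply]
    have : k' - k + k = k' := by omega
    rw [this, h']
  · left
    refine (isAncestor_iff T).mpr ⟨k - k', ?_⟩
    rw [← h', ← Function.iterate_add_apply]
    have : k - k' + k' = k := by omega
    rw [this, h]

lemma iterate_eq_unique {u v : V} {k : ℕ} (hk : k ≤ T.level v) (h : T.parent^[k] v = u) :
    k = T.level v - T.level u := by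
  have := level_iterate T hk
  rw [h] at this
  omega

lemma isAncestor_iterate {u v : V} (h : T.IsAncestor u v) :
    T.parent^[T.level v - T.level u] v = u := by
  obtain ⟨k, hk, h⟩ := (isAncestor_iff_le T).mp h
  rw [← iterate_eq_unique T hk h]
  exact h

end AncAux
namespace AncAux

open Finset Function

variable {V : Type} [Fintype V] [DecidableEq V] (T : TreeOn V)

lemma card_ancestors (v : V) :
    (Finset.univ.filter fun u => T.IsAncestor u v).card = T.level v + 1 := by
  have himg : (Finset.univ.filter fun u => T.IsAncestor u v) =
      (Finset.range (T.level v + 1)).image (fun k => T.parent^[k] v) := by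
    ext u
    simp only [Finset.mem_filter, Finset.mem_univ, true_and, Finset.mem_image, Finset.mem_range,
      Nat.lt_succ_iff]
    rw [isAncestor_iff_le]
  rw [himg, Finset.card_image_of_injOn, Finset.card_range]
  intro a ha b hb hab
  simp only [Finset.mem_range, Nat.lt_succ_iff, Finset.mem_coe] at ha hb
  have hab' : T.parent^[a] v = T.parent^[b] v := hab
  have h1 := level_iterate T ha
  have h2 := level_iterate T hb
  rw [hab'] at h1
  omega

lemma lcaLevel_spec (v w : V) :
    ∃ u, T.IsAncestor u v ∧ T.IsAncestor u w ∧ T.level u = T.lcaLevel v w ∧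
      (Finset.univ.filter fun x => T.IsAncestor x v ∧ T.IsAncestor x w) =
        Finset.univ.filter fun x => T.IsAncestor x u := by
  have hne : (Finset.univ.filter fun x => T.IsAncestor x v ∧ T.IsAncestor x w).Nonempty :=
    ⟨T.root, by simp [isAncestor_root T v, isAncestor_root T w]⟩
  obtain ⟨u, hu, hsup⟩ := Finset.exists_mem_eq_sup _ hne T.level
  simp only [Finset.mem_filter, Finset.mem_univ, true_and] at hu
  refine ⟨u, hu.1, hu.2, hsup.symm, ?_⟩
  ext x
  simp only [Finset.mem_filter, Finset.mem_univ, true_and]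
  constructor
  · rintro ⟨hxv, hxw⟩
    have hle : T.level x ≤ T.level u := by
      rw [← hsup]
      exact Finset.le_sup (f := T.level) (by simp [hxv, hxw])
    rcases isAncestor_comparable T hxv hu.1 with h | h
    · exact h
    · rw [eq_of_isAncestor_of_level_le T h hle]
      exact isAncestor_refl T x
  · intro hxu
    exact ⟨isAncestor_trans T hxu hu.1, isAncestor_trans T hxu hu.2⟩

lemma card_common_ancestors (v w : V) :
    (Finset.univ.filter fun u => u ≠ T.root ∧ T.IsAncestor u v ∧ T.IsAncestor u w).card =
      T.lcaLevel v w := by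
  obtain ⟨u, _, _, hlev, hset⟩ := lcaLevel_spec T v w
  have h1 : (Finset.univ.filter fun x => x ≠ T.root ∧ T.IsAncestor x v ∧ T.IsAncestor x w) =
      (Finset.univ.filter fun x => T.IsAncestor x u).erase T.root := by
    ext x
    simp only [Finset.mem_filter, Finset.mem_univ, true_and, Finset.mem_erase]
    constructor
    · rintro ⟨hx, hv, hw⟩
      refine ⟨hx, ?_⟩
      have : x ∈ Finset.univ.filter fun y => T.IsAncestor y v ∧ T.IsAncestor y w := by
        simp [hv, hw]
      rw [hset] at this
      simpa using this
    · rintro ⟨hx, hxu⟩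
      have : x ∈ Finset.univ.filter fun y => T.IsAncestor y v ∧ T.IsAncestor y w := by
        rw [hset]; simpa using hxu
      simp only [Finset.mem_filter, Finset.mem_univ, true_and] at this
      exact ⟨hx, this.1, this.2⟩
  rw [h1, Finset.card_erase_of_mem (by simp [isAncestor_root T u]), card_ancestors]
  omega

/-- The vertex-leaf incidence function: `1` if `u` is a non-root ancestor of the leaf `v`. -/
def Mmat (u : V) (v : T.Leaf) : ℝ := if u ≠ T.root ∧ T.IsAncestor u v.1 then 1 else 0

lemma anc_entry (v w : T.Leaf) :
    (T.lcaLevel v.1 w.1 : ℝ) = ∑ u : V, Mmat T u v * Mmat T u w := by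
  rw [← card_common_ancestors T v.1 w.1]
  rw [Finset.card_filter]
  push_cast
  apply Finset.sum_congr rfl
  intro u _
  unfold Mmat
  by_cases h1 : u ≠ T.root ∧ T.IsAncestor u v.1 <;>
    by_cases h2 : u ≠ T.root ∧ T.IsAncestor u w.1 <;>
      simp_all [h1, h2]

end AncAux
namespace AncAux

open Finset Function Matrix

lemma det_smul_one_add {R : Type} [CommRing R] {m : Type} [Fintype m] [DecidableEq m]
    (a : R) (A : Matrix m m R) :
    (a • (1 : Matrix m m R) + A).det =
      ∑ S : Finset m, a ^ (Fintype.card m - S.card) *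
        (A.submatrix (Subtype.val : {i // i ∈ S} → m) Subtype.val).det := by
  classical
  have hdet : ∀ M : Matrix m m R, M.det = Matrix.detRowAlternating M := fun _ => rfl
  have hrows : (a • (1 : Matrix m m R) + A) = (fun i => A i) + (fun i => (a • ((Pi.single i (1:R)) : m → R))) := by
    funext i j
    simp only [Matrix.add_apply, Matrix.smul_apply, Matrix.one_apply, Pi.add_apply,
      Pi.smul_apply, Pi.single_apply, smul_eq_mul]
    by_cases h : i = j <;> simp [h, eq_comm, add_comm]
  have hexp : Matrix.detRowAlternating (R := R) (n := m)
        ((fun i => A i) + fun i => (a • ((Pi.single i (1:R)) : m → R))) =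
      ∑ S : Finset m, Matrix.detRowAlternating
        (S.piecewise (fun i => A i) (fun i => (a • ((Pi.single i (1:R)) : m → R)))) :=
    (Matrix.detRowAlternating (R := R) (n := m)).toMultilinearMap.map_add_univ _ _
  rw [hdet, hrows, hexp]
  apply Finset.sum_congr rfl
  intro S _
  have hkey : (Matrix.detRowAlternating (R := R) (n := m))
        (S.piecewise (fun i => A i) (fun i => (a • ((Pi.single i (1:R)) : m → R)))) =
      (Matrix.det (Matrix.fromBlocks
        (A.submatrix (Subtype.val : {i // i ∈ S} → m) Subtype.val)
        (A.submatrix (Subtype.val : {i // i ∈ S} → m) (Subtype.val : {i // ¬ i ∈ S} → m))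
        0 (a • (1 : Matrix {i // ¬ i ∈ S} {i // ¬ i ∈ S} R)))) := by
    set N : Matrix m m R :=
      S.piecewise (fun i => A i) (fun i => (a • ((Pi.single i (1:R)) : m → R))) with hN
    rw [← hdet N, ← Matrix.det_submatrix_equiv_self (Equiv.sumCompl (· ∈ S)) N]
    congr 1
    ext i j
    rcases i with i | i <;> rcases j with j | j <;>
      simp only [Matrix.submatrix_apply, Equiv.sumCompl_apply_inl, Equiv.sumCompl_apply_inr,
        Matrix.fromBlocks_apply₁₁, Matrix.fromBlocks_apply₁₂, Matrix.fromBlocks_apply₂₁,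
        Matrix.fromBlocks_apply₂₂, hN]
    · show S.piecewise (fun i => A i) (fun i => (a • ((Pi.single i (1:R)) : m → R))) (i : m) (j : m) = _
      rw [Finset.piecewise_eq_of_mem _ _ _ i.2]
    · show S.piecewise (fun i => A i) (fun i => (a • ((Pi.single i (1:R)) : m → R))) (i : m) (j : m) = _
      rw [Finset.piecewise_eq_of_mem _ _ _ i.2]
    · show S.piecewise (fun i => A i) (fun i => (a • ((Pi.single i (1:R)) : m → R))) (i : m) (j : m) = _
      rw [Finset.piecewise_eq_of_notMem _ _ _ i.2]
      have hji : (j : m) ≠ (i : m) := fun h => i.2 (h ▸ j.2)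
      simp [Pi.single_apply, hji]
    · show S.piecewise (fun i => A i) (fun i => (a • ((Pi.single i (1:R)) : m → R))) (i : m) (j : m) = _
      rw [Finset.piecewise_eq_of_notMem _ _ _ i.2]
      simp only [Pi.smul_apply, Pi.single_apply, Matrix.smul_apply, Matrix.one_apply,
        smul_eq_mul]
      have hiff : ((j : m) = (i : m)) ↔ ((i : {x // ¬ x ∈ S}) = j) := by
        simp [Subtype.ext_iff, eq_comm]
      simp only [hiff]
  rw [hkey, Matrix.det_fromBlocks_zero₂₁, Matrix.det_smul, Matrix.det_one, mul_one]
  rw [mul_comm]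
  congr 2
  rw [Fintype.card_subtype_compl, Fintype.card_coe]

end AncAux
namespace AncAux

open Finset Function Matrix

variable {m ι : Type} [Fintype m] [DecidableEq m] [Fintype ι] [DecidableEq ι]

/-- Expansion of a Gram-type determinant over a finite set of "rows". -/
lemma gram_expand (A : Matrix ι m ℝ) (E : Finset ι) :
    (Matrix.of fun j j' : m => ∑ u ∈ E, A u j * A u j').det =
      ∑ g ∈ Fintype.piFinset (fun _ : m => E),
        (∏ j, A (g j) j) * (Matrix.of fun j j' : m => A (g j) j').det := by
  classical
  have hdet : ∀ M : Matrix m m ℝ, M.det = Matrix.detRowAlternating M := fun _ => rfl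
  have hrows : (Matrix.of fun j j' : m => ∑ u ∈ E, A u j * A u j') =
      fun j => ∑ u ∈ E, (A u j • (A u · : m → ℝ)) := by
    funext j j'
    simp [Finset.sum_apply]
  rw [hdet, hrows]
  have hexp : Matrix.detRowAlternating (R := ℝ) (n := m)
        (fun j => ∑ u ∈ E, (A u j • (A u · : m → ℝ))) =
      ∑ g ∈ Fintype.piFinset (fun _ : m => E),
        Matrix.detRowAlternating (R := ℝ) (n := m)
          (fun j => (A (g j) j • (A (g j) · : m → ℝ))) :=
    (Matrix.detRowAlternating (R := ℝ) (n := m)).toMultilinearMap.map_sum_finset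
      (fun j u => (A u j • (A u · : m → ℝ))) (fun _ => E)
  rw [hexp]
  apply Finset.sum_congr rfl
  intro g _
  have hsmul : Matrix.detRowAlternating (R := ℝ) (n := m)
        (fun j => (A (g j) j • (A (g j) · : m → ℝ))) =
      (∏ j, A (g j) j) • Matrix.detRowAlternating (R := ℝ) (n := m)
        (fun j => (A (g j) · : m → ℝ)) :=
    (Matrix.detRowAlternating (R := ℝ) (n := m)).toMultilinearMap.map_smul_univ
      (fun j => A (g j) j) (fun j => (A (g j) · : m → ℝ))
  rw [hsmul, smul_eq_mul]
  congr 1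

lemma rowM_det_eq_zero {A : Matrix ι m ℝ} {g : m → ι} (h : ¬ Function.Injective g) :
    (Matrix.of fun j j' : m => A (g j) j').det = 0 := by
  rw [Function.not_injective_iff] at h
  obtain ⟨a, b, hab, hne⟩ := h
  exact Matrix.det_zero_of_row_eq hne (by funext j'; simp [hab])

/-- Cauchy–Binet in Gram form. -/
lemma gram_sum (A : Matrix ι m ℝ) :
    (Matrix.of fun j j' : m => ∑ u : ι, A u j * A u j').det =
      ∑ E ∈ Finset.powersetCard (Fintype.card m) (Finset.univ : Finset ι),
        (Matrix.of fun j j' : m => ∑ u ∈ E, A u j * A u j').det := by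
  classical
  set T : (m → ι) → ℝ :=
    fun g => (∏ j, A (g j) j) * (Matrix.of fun j j' : m => A (g j) j').det with hT
  have hTinj : ∀ g : m → ι, T g ≠ 0 → Function.Injective g := by
    intro g hg
    by_contra hni
    exact hg (by rw [hT]; simp [rowM_det_eq_zero hni])
  have h1 : (Matrix.of fun j j' : m => ∑ u : ι, A u j * A u j').det = ∑ g : m → ι, T g := by
    rw [gram_expand A Finset.univ, Fintype.piFinset_univ]
  have h2 : ∀ E ∈ Finset.powersetCard (Fintype.card m) (Finset.univ : Finset ι),
      (Matrix.of fun j j' : m => ∑ u ∈ E, A u j * A u j').det =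
        ∑ g ∈ Finset.univ.filter
            (fun g : m → ι => Function.Injective g ∧ Finset.image g Finset.univ = E), T g := by
    intro E hE
    rw [Finset.mem_powersetCard_univ] at hE
    rw [gram_expand A E]
    symm
    apply Finset.sum_subset
    · intro g hg
      simp only [Finset.mem_filter, Finset.mem_univ, true_and] at hg
      rw [Fintype.mem_piFinset]
      intro a
      rw [← hg.2]
      exact Finset.mem_image_of_mem _ (Finset.mem_univ a)
    · intro g hg hnot
      by_contra hne
      have hinj : Function.Injective g := hTinj g hne
      have himg : Finset.image g Finset.univ = E := by
        apply Finset.eq_of_subset_of_card_le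
        · intro x hx
          simp only [Finset.mem_image] at hx
          obtain ⟨a, _, rfl⟩ := hx
          exact (Fintype.mem_piFinset.mp hg) a
        · rw [Finset.card_image_of_injective _ hinj, Finset.card_univ, hE]
      exact hnot (by simp [hinj, himg])
  rw [h1, Finset.sum_congr rfl h2]
  have hmap : ∀ g ∈ Finset.univ.filter (fun g : m → ι => Function.Injective g),
      Finset.image g Finset.univ ∈ Finset.powersetCard (Fintype.card m) (Finset.univ : Finset ι) := by
    intro g hg
    simp only [Finset.mem_filter, Finset.mem_univ, true_and] at hg
    rw [Finset.mem_powersetCard_univ, Finset.card_image_of_injective _ hg, Finset.card_univ]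
  have hfib := Finset.sum_fiberwise_of_maps_to hmap T
  have hfilter : ∀ E, (Finset.univ.filter (fun g : m → ι => Function.Injective g)).filter
        (fun g => Finset.image g Finset.univ = E) =
      Finset.univ.filter
        (fun g : m → ι => Function.Injective g ∧ Finset.image g Finset.univ = E) := by
    intro E
    rw [Finset.filter_filter]
  rw [← Finset.sum_filter_of_ne (fun g _ hg => hTinj g hg)]
  rw [← hfib]
  apply Finset.sum_congr rfl
  intro E _
  rw [hfilter]
end AncAux
namespace AncAux

open Finset Function Matrix

lemma gram_eq_sq {m ι : Type} [Fintype m] [DecidableEq m] [Fintype ι] [DecidableEq ι]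
    (A : Matrix ι m ℝ) (E : Finset ι) (κ : m ≃ {x // x ∈ E}) :
    (Matrix.of fun j j' : m => ∑ u ∈ E, A u j * A u j').det =
      ((Matrix.of fun i j : m => A ((κ i : {x // x ∈ E}) : ι) j).det) ^ 2 := by
  have hfac : (Matrix.of fun j j' : m => ∑ u ∈ E, A u j * A u j') =
      (Matrix.of fun i j : m => A ((κ i : {x // x ∈ E}) : ι) j)ᵀ *
        (Matrix.of fun i j : m => A ((κ i : {x // x ∈ E}) : ι) j) := by
    ext j j'
    simp only [Matrix.mul_apply, Matrix.transpose_apply, Matrix.of_apply]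
    rw [← Finset.sum_coe_sort E (fun u => A u j * A u j'),
      ← Equiv.sum_comp κ (fun x => A (x : ι) j * A (x : ι) j')]
  rw [hfac, Matrix.det_mul, Matrix.det_transpose, sq]

variable {V : Type} [Fintype V] [DecidableEq V] (T : TreeOn V)

/-- The space of candidate path collections. -/
abbrev PFun := ∀ v : T.Leaf, Fin (T.level v.1 + 1)

/-- Pairwise edge-disjointness of the collection of upward paths. -/
def Disj (P : PFun T) : Prop :=
  ∀ v w : T.Leaf, v ≠ w → ∀ i < (P v).1, ∀ j < (P w).1,
    T.parent^[i] v.1 ≠ T.parent^[j] w.1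

instance (P : PFun T) : Decidable (Disj T P) := by unfold Disj; infer_instance

/-- The top (lower endpoint of the highest edge) of the path from `v`. -/
def top (P : PFun T) (v : T.Leaf) : V := T.parent^[(P v).1 - 1] v.1

/-- A system on `S`: a disjoint collection whose nontrivial paths are exactly those in `S`. -/
def SysProp (S : Finset T.Leaf) (P : PFun T) : Prop :=
  (∀ v, (P v).1 ≠ 0 ↔ v ∈ S) ∧ Disj T P

instance (S : Finset T.Leaf) (P : PFun T) : Decidable (SysProp T S P) := by
  unfold SysProp; infer_instance

lemma top_isAncestor (P : PFun T) (v : T.Leaf) : T.IsAncestor (top T P v) v.1 :=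
  (isAncestor_iff T).mpr ⟨_, rfl⟩

lemma top_ne_root {P : PFun T} {v : T.Leaf} (h : (P v).1 ≠ 0) : top T P v ≠ T.root := by
  intro hroot
  have hb : (P v).1 - 1 ≤ T.level v.1 := by
    have := (P v).2; omega
  have := level_iterate T hb
  rw [top] at hroot
  rw [hroot, level_root] at this
  have hb2 := (P v).2
  omega

lemma level_top {P : PFun T} (v : T.Leaf) (h : (P v).1 ≠ 0) :
    T.level (top T P v) = T.level v.1 - ((P v).1 - 1) := by
  apply level_iterate
  have := (P v).2; omega

/-- If `e` is an ancestor of `v` whose level is at least that of the top of `v`'s path,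
then `e` is an edge of `v`'s path. -/
lemma mem_path {P : PFun T} {v : T.Leaf} (h : (P v).1 ≠ 0) {e : V}
    (he : T.IsAncestor e v.1) (hle : T.level (top T P v) ≤ T.level e) :
    ∃ c < (P v).1, T.parent^[c] v.1 = e := by
  refine ⟨T.level v.1 - T.level e, ?_, isAncestor_iterate T he⟩
  have h1 := level_top T v h
  have h2 : T.level e ≤ T.level v.1 := level_le_of_isAncestor T he
  have h3 := (P v).2
  omega

/-- The tops of distinct nontrivial paths in a disjoint collection are distinct. -/
lemma top_injOn {P : PFun T} (hd : Disj T P) {v w : T.Leaf} (hv : (P v).1 ≠ 0)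
    (hw : (P w).1 ≠ 0) (hne : v ≠ w) : top T P v ≠ top T P w := by
  intro h
  exact hd v w hne _ (by omega) _ (by omega) h

end AncAux
namespace AncAux

open Finset Function Matrix

variable {V : Type} [Fintype V] [DecidableEq V] (T : TreeOn V)

lemma top_eq_of_systop {S : Finset T.Leaf} {E : Finset V} {P : PFun T}
    (hP : SysProp T S P) (hE : S.image (top T P) = E) {es : V} (he : es ∈ E)
    {vs : T.Leaf} (hv : vs ∈ S)
    (honly : ∀ v : T.Leaf, v ∈ S → T.IsAncestor es v.1 → v = vs) :
    top T P vs = es := by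
  rw [← hE] at he
  obtain ⟨w, hw, hwe⟩ := Finset.mem_image.mp he
  have : T.IsAncestor es w.1 := hwe ▸ top_isAncestor T P w
  rw [← honly w hw this]
  exact hwe

lemma sysTop_card_erase (S : Finset T.Leaf) (E : Finset V) (vs : T.Leaf) (hv : vs ∈ S)
    (es : V) (he : es ∈ E) (heroot : es ≠ T.root) (hanc : T.IsAncestor es vs.1)
    (honly : ∀ v : T.Leaf, v ∈ S → T.IsAncestor es v.1 → v = vs) :
    Nat.card {P : PFun T // SysProp T S P ∧ S.image (top T P) = E} =
      Nat.card {P : PFun T // SysProp T (S.erase vs) P ∧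
        (S.erase vs).image (top T P) = E.erase es} := by
  classical
  have h0 : T.level es ≠ 0 := fun h => heroot ((level_eq_zero_iff T).mp h)
  have hlevs : T.level es ≤ T.level vs.1 := level_le_of_isAncestor T hanc
  set c : ℕ := T.level vs.1 - T.level es with hc
  have hc1 : c + 1 < T.level vs.1 + 1 := by omega
  have hiter : T.parent^[c] vs.1 = es := isAncestor_iterate T hanc
  have hupd_ne : ∀ (P : PFun T) (x : Fin (T.level vs.1 + 1)) (v : T.Leaf), v ≠ vs →
      Function.update P vs x v = P v := fun P x v hne => Function.update_of_ne hne _ _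
  have htop_ne : ∀ (P : PFun T) (x : Fin (T.level vs.1 + 1)) (v : T.Leaf), v ≠ vs →
      top T (Function.update P vs x) v = top T P v := by
    intro P x v hne
    unfold top
    rw [hupd_ne P x v hne]
  -- the forward direction
  have hF : ∀ P : PFun T, SysProp T S P → S.image (top T P) = E →
      SysProp T (S.erase vs) (Function.update P vs ⟨0, Nat.succ_pos _⟩) ∧
        (S.erase vs).image (top T (Function.update P vs ⟨0, Nat.succ_pos _⟩)) = E.erase es := by
    intro P hP hE
    have htopvs := top_eq_of_systop T hP hE he hv honly
    set P0 := Function.update P vs (⟨0, Nat.succ_pos _⟩ : Fin (T.level vs.1 + 1)) with hP0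
    have hle : ∀ v, (P0 v).1 ≤ (P v).1 := by
      intro v
      by_cases hne : v = vs
      · subst hne; simp [hP0, Function.update_self]
      · rw [hP0, hupd_ne P _ v hne]
    refine ⟨⟨?_, ?_⟩, ?_⟩
    · intro v
      by_cases hne : v = vs
      · subst hne
        simp [hP0, Function.update_self]
      · rw [hP0, hupd_ne P _ v hne, Finset.mem_erase]
        rw [hP.1 v]
        simp [hne]
    · intro v w hne i hi j hj
      exact hP.2 v w hne i (lt_of_lt_of_le hi (hle v)) j (lt_of_lt_of_le hj (hle w))
    · ext u
      simp only [Finset.mem_image, Finset.mem_erase]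
      constructor
      · rintro ⟨w, ⟨hwne, hwS⟩, hwu⟩
        rw [hP0, htop_ne P _ w hwne] at hwu
        refine ⟨?_, ?_⟩
        · intro hu
          rw [hu] at hwu
          exact hwne (honly w hwS (hwu ▸ top_isAncestor T P w))
        · rw [← hE]
          exact Finset.mem_image.mpr ⟨w, hwS, hwu⟩
      · rintro ⟨hune, huE⟩
        rw [← hE] at huE
        obtain ⟨w, hwS, hwu⟩ := Finset.mem_image.mp huE
        have hwne : w ≠ vs := by
          rintro rfl
          rw [htopvs] at hwu
          exact hune hwu.symm
        exact ⟨w, ⟨hwne, hwS⟩,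
          by rw [hP0, htop_ne P _ w hwne]; exact hwu⟩
  -- the backward direction
  have hG : ∀ P' : PFun T, SysProp T (S.erase vs) P' →
      (S.erase vs).image (top T P') = E.erase es →
      SysProp T S (Function.update P' vs ⟨c + 1, hc1⟩) ∧
        S.image (top T (Function.update P' vs ⟨c + 1, hc1⟩)) = E := by
    intro P' hP' hE'
    set P1 := Function.update P' vs (⟨c + 1, hc1⟩ : Fin (T.level vs.1 + 1)) with hP1
    have hP1vs : (P1 vs).1 = c + 1 := by simp [hP1, Function.update_self]
    have hanc_of : ∀ w : T.Leaf, w ≠ vs → w ∈ S → ∀ i ≤ c, ∀ j : ℕ,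
        T.parent^[i] vs.1 = T.parent^[j] w.1 → False := by
      intro w hwne hwS i hi j hij
      have hesw : T.IsAncestor es w.1 := by
        refine (isAncestor_iff T).mpr ⟨(c - i) + j, ?_⟩
        rw [Function.iterate_add_apply, ← hij, ← Function.iterate_add_apply]
        have hci : c - i + i = c := by omega
        rw [hci, hiter]
      exact hwne (honly w hwS hesw)
    refine ⟨⟨?_, ?_⟩, ?_⟩
    · intro v
      by_cases hne : v = vs
      · subst hne
        simp [hP1vs, hv]
      · rw [hP1, hupd_ne P' _ v hne, hP'.1 v, Finset.mem_erase]
        simp [hne]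
    · intro v w hne i hi j hj heq
      by_cases hv1 : v = vs
      · rw [hv1] at hi heq
        have hwne : w ≠ vs := fun h => hne (hv1.trans h.symm)
        have hj' : j < (P' w).1 := by rwa [hP1, hupd_ne P' _ w hwne] at hj
        have hwS : w ∈ S :=
          (Finset.mem_erase.mp ((hP'.1 w).mp (by omega))).2
        have hi' : i ≤ c := by rw [hP1vs] at hi; omega
        exact hanc_of w hwne hwS i hi' j heq
      · by_cases hw1 : w = vs
        · rw [hw1] at hj heq
          have hi' : i < (P' v).1 := by rwa [hP1, hupd_ne P' _ v hv1] at hi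
          have hvS : v ∈ S :=
            (Finset.mem_erase.mp ((hP'.1 v).mp (by omega))).2
          have hj' : j ≤ c := by rw [hP1vs] at hj; omega
          exact hanc_of v hv1 hvS j hj' i heq.symm
        · have hi' : i < (P' v).1 := by rwa [hP1, hupd_ne P' _ v hv1] at hi
          have hj' : j < (P' w).1 := by rwa [hP1, hupd_ne P' _ w hw1] at hj
          exact hP'.2 v w hne i hi' j hj' heq
    · have htopvs1 : top T P1 vs = es := by
        show T.parent^[(P1 vs).1 - 1] vs.1 = es
        rw [hP1vs]
        simpa using hiter
      conv_lhs => rw [← Finset.insert_erase hv]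
      rw [Finset.image_insert, htopvs1]
      have himg : (S.erase vs).image (top T P1) = (S.erase vs).image (top T P') := by
        apply Finset.image_congr
        intro x hx
        exact htop_ne P' _ x (Finset.mem_erase.mp (Finset.mem_coe.mp hx)).1
      rw [himg, hE', Finset.insert_erase he]
  refine Nat.card_congr ?_
  refine
    { toFun := fun P => ⟨Function.update P.1 vs ⟨0, Nat.succ_pos _⟩, hF P.1 P.2.1 P.2.2⟩,
      invFun := fun P' => ⟨Function.update P'.1 vs ⟨c + 1, hc1⟩, hG P'.1 P'.2.1 P'.2.2⟩,
      left_inv := ?_, right_inv := ?_ }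
  · rintro ⟨P, hP, hE⟩
    apply Subtype.ext
    simp only
    rw [Function.update_idem]
    have htopvs : T.parent^[(P vs).1 - 1] vs.1 = es := top_eq_of_systop T hP hE he hv honly
    have hnz : (P vs).1 ≠ 0 := (hP.1 vs).mpr hv
    have hb : (P vs).1 - 1 ≤ T.level vs.1 := by have := (P vs).2; omega
    have huniq := iterate_eq_unique T hb htopvs
    have hPvs : P vs = ⟨c + 1, hc1⟩ := by
      apply Fin.ext
      simp only
      omega
    rw [← hPvs, Function.update_eq_self]
  · rintro ⟨P', hP', hE'⟩
    apply Subtype.ext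
    simp only
    rw [Function.update_idem]
    have hPvs : P' vs = ⟨0, Nat.succ_pos _⟩ := by
      apply Fin.ext
      simp only
      by_contra hne
      exact (Finset.notMem_erase vs S) ((hP'.1 vs).mp hne)
    rw [← hPvs, Function.update_eq_self]

end AncAux
namespace AncAux

open Finset Function Matrix

variable {V : Type} [Fintype V] [DecidableEq V] (T : TreeOn V)

lemma key : ∀ (n : ℕ) (m : Type) [Fintype m] [DecidableEq m], Fintype.card m = n →
    ∀ (f : m → T.Leaf) (e : m → V), Function.Injective f → Function.Injective e →
    ((Matrix.of fun i j : m => Mmat T (e i) (f j)).det) ^ 2 =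
      (Nat.card {P : PFun T // SysProp T (Finset.univ.image f) P ∧
        (Finset.univ.image f).image (top T P) = Finset.univ.image e} : ℝ) := by
  intro n
  induction n with
  | zero =>
    intro m _ _ hm f e hf he
    haveI : IsEmpty m := Fintype.card_eq_zero_iff.mp hm
    rw [Matrix.det_isEmpty]
    have hS0 : (Finset.univ.image f) = (∅ : Finset T.Leaf) := by
      rw [Finset.univ_eq_empty, Finset.image_empty]
    have hE0 : (Finset.univ.image e) = (∅ : Finset V) := by
      rw [Finset.univ_eq_empty, Finset.image_empty]
    rw [hS0, hE0]
    haveI : Nonempty {P : PFun T // SysProp T ∅ P ∧ (∅ : Finset T.Leaf).image (top T P) = ∅} := by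
      refine ⟨⟨fun v => ⟨0, Nat.succ_pos _⟩, ⟨⟨by simp, ?_⟩, by simp⟩⟩⟩
      intro v w hne i hi j hj
      simp at hi
    haveI : Subsingleton
        {P : PFun T // SysProp T ∅ P ∧ (∅ : Finset T.Leaf).image (top T P) = ∅} := by
      constructor
      rintro ⟨P, ⟨hP1, _⟩, _⟩ ⟨Q, ⟨hQ1, _⟩, _⟩
      apply Subtype.ext
      funext v
      apply Fin.ext
      have h1 : (P v).1 = 0 := by
        by_contra h
        exact absurd ((hP1 v).mp h) (by simp)
      have h2 : (Q v).1 = 0 := by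
        by_contra h
        exact absurd ((hQ1 v).mp h) (by simp)
      rw [h1, h2]
    rw [Nat.card_unique]
    norm_num
  | succ n ih =>
    intro m _ _ hm f e hf he
    set S : Finset T.Leaf := Finset.univ.image f with hS
    set E : Finset V := Finset.univ.image e with hE
    set B : Matrix m m ℝ := Matrix.of fun i j : m => Mmat T (e i) (f j) with hB
    by_cases hroot : T.root ∈ E
    · -- a zero row: the root is not a non-root ancestor of anything
      obtain ⟨i0, _, hi0⟩ := Finset.mem_image.mp hroot
      have hdet : B.det = 0 := by
        apply Matrix.det_eq_zero_of_row_eq_zero i0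
        intro j
        simp [hB, Mmat, hi0]
      haveI : IsEmpty {P : PFun T // SysProp T S P ∧ S.image (top T P) = E} := by
        constructor
        rintro ⟨P, hP, hI⟩
        rw [← hI] at hroot
        obtain ⟨w, hwS, hwtop⟩ := Finset.mem_image.mp hroot
        have hnz : (P w).1 ≠ 0 := (hP.1 w).mpr hwS
        exact top_ne_root T hnz hwtop
      rw [hdet, Nat.card_of_isEmpty]
      norm_num
    · have hmne : Nonempty m := Fintype.card_pos_iff.mp (by omega)
      obtain ⟨istar, _, hmax⟩ :=
        Finset.exists_max_image Finset.univ (fun i => T.level (e i)) Finset.univ_nonempty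
      set es : V := e istar with hes
      have hesE : es ∈ E := Finset.mem_image_of_mem e (Finset.mem_univ istar)
      have hesroot : es ≠ T.root := fun h => hroot (h ▸ hesE)
      have hmaxE : ∀ u ∈ E, T.level u ≤ T.level es := by
        intro u hu
        obtain ⟨i, _, rfl⟩ := Finset.mem_image.mp hu
        exact hmax i (Finset.mem_univ i)
      set Sstar : Finset m := Finset.univ.filter (fun j : m => T.IsAncestor es (f j).1)
        with hSstar
      rcases Finset.eq_empty_or_nonempty Sstar with h0 | ⟨jstar, hjstar⟩
      · -- no leaf below the deepest edge: zero row and no system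
        have hdet : B.det = 0 := by
          apply Matrix.det_eq_zero_of_row_eq_zero istar
          intro j
          have : ¬ T.IsAncestor es (f j).1 := by
            intro hanc
            have : j ∈ Sstar := by simp [hSstar, hanc]
            simp [h0] at this
          simp [hB, Mmat, ← hes, this]
        haveI : IsEmpty {P : PFun T // SysProp T S P ∧ S.image (top T P) = E} := by
          constructor
          rintro ⟨P, hP, hI⟩
          rw [← hI] at hesE
          obtain ⟨w, hwS, hwtop⟩ := Finset.mem_image.mp hesE
          obtain ⟨j, _, rfl⟩ := Finset.mem_image.mp hwS
          have : j ∈ Sstar := by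
            simp only [hSstar, Finset.mem_filter, Finset.mem_univ, true_and]
            exact hwtop ▸ top_isAncestor T P (f j)
          simp [h0] at this
        rw [hdet, Nat.card_of_isEmpty]
        norm_num
      · have hjanc : T.IsAncestor es (f jstar).1 := by
          have := hjstar
          simp only [hSstar, Finset.mem_filter, Finset.mem_univ, true_and] at this
          exact this
        by_cases htwo : ∃ j₂ ∈ Sstar, j₂ ≠ jstar
        · -- two leaves below the deepest edge: equal columns and no system
          obtain ⟨j2, hj2, hj2ne⟩ := htwo
          have hj2anc : T.IsAncestor es (f j2).1 := by
            have := hj2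
            simp only [hSstar, Finset.mem_filter, Finset.mem_univ, true_and] at this
            exact this
          have hcols : ∀ i : m, B i jstar = B i j2 := by
            intro i
            have hlev : T.level (e i) ≤ T.level es := hmax i (Finset.mem_univ i)
            have haux : ∀ v w : T.Leaf, T.IsAncestor es v.1 → T.IsAncestor es w.1 →
                T.IsAncestor (e i) v.1 → T.IsAncestor (e i) w.1 := by
              intro v w hv hw huv
              rcases isAncestor_comparable T huv hv with h | h
              · exact isAncestor_trans T h hw
              · have : es = e i := eq_of_isAncestor_of_level_le T h hlev
                exact this ▸ hw
            simp only [hB, Matrix.of_apply, Mmat]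
            by_cases h1 : e i ≠ T.root ∧ T.IsAncestor (e i) (f jstar).1 <;>
              by_cases h2 : e i ≠ T.root ∧ T.IsAncestor (e i) (f j2).1
            · rw [if_pos h1, if_pos h2]
            · exact absurd ⟨h1.1, haux _ _ hjanc hj2anc h1.2⟩ h2
            · exact absurd ⟨h2.1, haux _ _ hj2anc hjanc h2.2⟩ h1
            · rw [if_neg h1, if_neg h2]
          have hdet : B.det = 0 := by
            rw [← Matrix.det_transpose]
            exact Matrix.det_zero_of_row_eq (fun h => hj2ne h.symm)
              (by funext i; simp [Matrix.transpose_apply, hcols i])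
          haveI : IsEmpty {P : PFun T // SysProp T S P ∧ S.image (top T P) = E} := by
            constructor
            rintro ⟨P, hP, hI⟩
            have hv1S : f jstar ∈ S := Finset.mem_image_of_mem f (Finset.mem_univ jstar)
            have hv2S : f j2 ∈ S := Finset.mem_image_of_mem f (Finset.mem_univ j2)
            have hnz1 : (P (f jstar)).1 ≠ 0 := (hP.1 _).mpr hv1S
            have hnz2 : (P (f j2)).1 ≠ 0 := (hP.1 _).mpr hv2S
            have htopE : ∀ v : T.Leaf, v ∈ S → T.level (top T P v) ≤ T.level es := by
              intro v hvS
              apply hmaxE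
              rw [← hI]
              exact Finset.mem_image_of_mem _ hvS
            obtain ⟨c1, hc1, hc1e⟩ := mem_path T hnz1 hjanc (htopE _ hv1S)
            obtain ⟨c2, hc2, hc2e⟩ := mem_path T hnz2 hj2anc (htopE _ hv2S)
            exact hP.2 (f jstar) (f j2) (fun h => hj2ne (hf h).symm) c1 hc1 c2 hc2
              (by rw [hc1e, hc2e])
          rw [hdet, Nat.card_of_isEmpty]
          norm_num
        · -- exactly one leaf below the deepest edge: reduction step
          push_neg at htwo
          set vstar : T.Leaf := f jstar with hvstar
          have hvS : vstar ∈ S := Finset.mem_image_of_mem f (Finset.mem_univ jstar)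
          have honly : ∀ v : T.Leaf, v ∈ S → T.IsAncestor es v.1 → v = vstar := by
            intro v hv hanc
            obtain ⟨j, _, rfl⟩ := Finset.mem_image.mp hv
            have : j ∈ Sstar := by simp [hSstar, hanc]
            rw [htwo j this]
          -- permute rows so that row jstar is the deepest edge
          set π : Equiv.Perm m := Equiv.swap istar jstar with hπ
          set e' : m → V := e ∘ π with he'
          have he'inj : Function.Injective e' := he.comp π.injective
          have he'j : e' jstar = es := by
            simp [he', hπ, Equiv.swap_apply_right, hes]
          set B' : Matrix m m ℝ := Matrix.of fun i j : m => Mmat T (e' i) (f j) with hB'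
          have hB'sub : B' = B.submatrix π id := by
            ext i j
            simp [hB', hB, he']
          have hsq : B'.det ^ 2 = B.det ^ 2 := by
            rw [hB'sub, Matrix.det_permute]
            rcases Int.units_eq_one_or (Equiv.Perm.sign π) with h | h <;> rw [h] <;>
              push_cast <;> ring
          -- block decomposition of B'
          haveI hUniq : Unique {x : m // x = jstar} :=
            ⟨⟨⟨jstar, rfl⟩⟩, by rintro ⟨x, rfl⟩; rfl⟩
          set D : Matrix {x : m // ¬ x = jstar} {x : m // ¬ x = jstar} ℝ :=
            Matrix.of fun i j => Mmat T (e' i.1) (f j.1) with hD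
          have hblock : B'.det = D.det := by
            rw [← Matrix.det_submatrix_equiv_self (Equiv.sumCompl (· = jstar)) B']
            have hfb : B'.submatrix (Equiv.sumCompl (· = jstar)) (Equiv.sumCompl (· = jstar)) =
                Matrix.fromBlocks (Matrix.of fun _ _ => (1 : ℝ)) 0
                  (Matrix.of fun (i : {x : m // ¬ x = jstar}) (_ : {x : m // x = jstar}) =>
                    Mmat T (e' i.1) (f jstar)) D := by
              ext i j
              rcases i with i | i <;> rcases j with j | j <;>
                simp only [Matrix.submatrix_apply, Equiv.sumCompl_apply_inl,
                  Equiv.sumCompl_apply_inr, Matrix.fromBlocks_apply₁₁, Matrix.fromBlocks_apply₁₂,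
                  Matrix.fromBlocks_apply₂₁, Matrix.fromBlocks_apply₂₂, hB', Matrix.of_apply]
              · rw [i.2, j.2, he'j]
                simp only [Mmat, hvstar]
                rw [if_pos ⟨hesroot, hjanc⟩]
              · rw [i.2, he'j]
                have : ¬ T.IsAncestor es (f j.1).1 := by
                  intro hanc
                  exact j.2 (htwo j.1 (by simp [hSstar, hanc]))
                simp [Mmat, this]
              · rw [j.2]
              · rfl
            rw [hfb, Matrix.det_fromBlocks_zero₁₂, Matrix.det_unique]
            simp
          -- apply the induction hypothesis
          have hcard' : Fintype.card {x : m // ¬ x = jstar} = n := by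
            have h1 := Fintype.card_subtype_compl (fun x : m => x = jstar)
            rw [Fintype.card_subtype_eq] at h1
            omega
          have hf' : Function.Injective (fun i : {x : m // ¬ x = jstar} => f i.1) :=
            fun a b hab => Subtype.ext (hf hab)
          have he'' : Function.Injective (fun i : {x : m // ¬ x = jstar} => e' i.1) :=
            fun a b hab => Subtype.ext (he'inj hab)
          have hIH := ih {x : m // ¬ x = jstar} hcard'
            (fun i => f i.1) (fun i => e' i.1) hf' he''
          -- identify the images
          have himgf : Finset.univ.image (fun i : {x : m // ¬ x = jstar} => f i.1) =
              S.erase vstar := by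
            ext v
            simp only [Finset.mem_image, Finset.mem_erase, Finset.mem_univ, true_and]
            constructor
            · rintro ⟨i, _, rfl⟩
              refine ⟨fun h => i.2 (hf h), Finset.mem_image_of_mem f (Finset.mem_univ i.1)⟩
            · rintro ⟨hne, hv⟩
              obtain ⟨j, _, rfl⟩ := Finset.mem_image.mp hv
              exact ⟨⟨j, fun h => hne (by rw [h])⟩, rfl⟩
          have himge : Finset.univ.image (fun i : {x : m // ¬ x = jstar} => e' i.1) =
              E.erase es := by
            ext u
            simp only [Finset.mem_image, Finset.mem_erase, Finset.mem_univ, true_and]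
            constructor
            · rintro ⟨i, _, rfl⟩
              refine ⟨fun h => i.2 (he'inj (h.trans he'j.symm)), ?_⟩
              rw [hE]
              exact Finset.mem_image_of_mem e (Finset.mem_univ (π i.1))
            · rintro ⟨hne, hu⟩
              obtain ⟨i, _, rfl⟩ := Finset.mem_image.mp hu
              refine ⟨⟨π.symm i, fun h => hne (by rw [← he'j, ← h]; simp [he'])⟩, ?_⟩
              simp [he']
          rw [himgf, himge] at hIH
          -- the counting reduction
          have hcount := sysTop_card_erase T S E vstar hvS es hesE hesroot
            (by rw [hvstar]; exact hjanc) honly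
          rw [← hsq, hblock, hIH, hcount]
end AncAux
namespace AncAux

open Finset Function Matrix

variable {V : Type} [Fintype V] [DecidableEq V] (T : TreeOn V)

lemma card_image_top {S : Finset T.Leaf} {P : PFun T} (hP : SysProp T S P) :
    (S.image (top T P)).card = S.card := by
  apply Finset.card_image_of_injOn
  intro v hv w hw hne
  by_contra hvw
  exact top_injOn T hP.2 ((hP.1 v).mpr (Finset.mem_coe.mp hv))
    ((hP.1 w).mpr (Finset.mem_coe.mp hw)) hvw hne

lemma sys_partition (S : Finset T.Leaf) :
    ∑ E ∈ Finset.powersetCard S.card (Finset.univ : Finset V),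
        Nat.card {P : PFun T // SysProp T S P ∧ S.image (top T P) = E} =
      Nat.card {P : PFun T // SysProp T S P} := by
  classical
  have hequiv : {P : PFun T // SysProp T S P} ≃
      Σ E : {E : Finset V // E ∈ Finset.powersetCard S.card (Finset.univ : Finset V)},
        {P : PFun T // SysProp T S P ∧ S.image (top T P) = E.1} :=
    { toFun := fun P => ⟨⟨S.image (top T P.1),
        Finset.mem_powersetCard_univ.mpr (card_image_top T P.2)⟩, ⟨P.1, P.2, rfl⟩⟩,
      invFun := fun x => ⟨x.2.1, x.2.2.1⟩,
      left_inv := fun P => rfl,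
      right_inv := by
        rintro ⟨⟨E, hE⟩, P, hP, himg⟩
        have h2 : S.image (top T P) = E := himg
        subst h2
        rfl }
  rw [Nat.card_congr hequiv, Nat.card_eq_fintype_card, Fintype.card_sigma]
  rw [← Finset.sum_coe_sort (Finset.powersetCard S.card (Finset.univ : Finset V))
    (fun E => Nat.card {P : PFun T // SysProp T S P ∧ S.image (top T P) = E})]
  apply Finset.sum_congr rfl
  intro E _
  rw [Nat.card_eq_fintype_card]

lemma det_principal (S : Finset T.Leaf) :
    (T.ancMatrix.submatrix (Subtype.val : {v // v ∈ S} → T.Leaf) Subtype.val).det =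
      (Nat.card {P : PFun T // SysProp T S P} : ℝ) := by
  classical
  set A : Matrix V {v // v ∈ S} ℝ := Matrix.of fun u j => Mmat T u j.1 with hA
  have hmat : T.ancMatrix.submatrix (Subtype.val : {v // v ∈ S} → T.Leaf) Subtype.val =
      Matrix.of fun j j' : {v // v ∈ S} => ∑ u : V, A u j * A u j' := by
    ext j j'
    simp only [Matrix.submatrix_apply, TreeOn.ancMatrix, Matrix.of_apply, hA]
    exact anc_entry T j.1 j'.1
  rw [hmat, gram_sum A, ← sys_partition T S]
  rw [Nat.cast_sum]
  have hcardS : Fintype.card {v // v ∈ S} = S.card := Fintype.card_coe S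
  rw [show Finset.powersetCard (Fintype.card {v // v ∈ S}) (Finset.univ : Finset V) =
    Finset.powersetCard S.card (Finset.univ : Finset V) by rw [hcardS]]
  apply Finset.sum_congr rfl
  intro E hE
  rw [Finset.mem_powersetCard_univ] at hE
  -- enumeration of E by the subtype of S
  have hSE : S.card = E.card := hE.symm
  set κ : {v // v ∈ S} ≃ {x // x ∈ E} :=
    (Finset.equivFinOfCardEq (rfl : S.card = S.card)).trans
      (Finset.equivFinOfCardEq hE).symm with hκ
  rw [gram_eq_sq A E κ]
  have hkey := key T S.card {v // v ∈ S} hcardS (fun j => j.1) (fun i => (κ i).1)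
    (fun a b hab => Subtype.ext hab) (fun a b hab => κ.injective (Subtype.ext hab))
  have himgf : Finset.univ.image (fun j : {v // v ∈ S} => j.1) = S := by
    ext v
    simp only [Finset.mem_image, Finset.mem_univ, true_and]
    constructor
    · rintro ⟨⟨a, ha⟩, rfl⟩; exact ha
    · intro hv; exact ⟨⟨v, hv⟩, rfl⟩
  have himge : Finset.univ.image (fun i : {v // v ∈ S} => ((κ i : {x // x ∈ E}) : V)) = E := by
    ext u
    simp only [Finset.mem_image, Finset.mem_univ, true_and]
    constructor
    · rintro ⟨i, rfl⟩; exact (κ i).2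
    · intro hu
      exact ⟨κ.symm ⟨u, hu⟩, by simp⟩
  rw [himgf, himge] at hkey
  exact hkey

end AncAux
namespace AncAux

open Finset Function Matrix Polynomial

variable {V : Type} [Fintype V] [DecidableEq V] (T : TreeOn V)

lemma edcoll_total : Nat.card T.EDColl = ∑ S : Finset T.Leaf,
    Nat.card {P : PFun T // SysProp T S P} := by
  classical
  have hequiv : T.EDColl ≃ Σ S : Finset T.Leaf, {P : PFun T // SysProp T S P} :=
    { toFun := fun P => ⟨Finset.univ.filter (fun v => (P.1 v).1 ≠ 0),
        ⟨P.1, ⟨fun v => by simp, P.2⟩⟩⟩,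
      invFun := fun x => ⟨x.2.1, x.2.2.2⟩,
      left_inv := fun P => rfl,
      right_inv := by
        rintro ⟨S, P, hP⟩
        have hfS : Finset.univ.filter (fun v => (P v).1 ≠ 0) = S := by
          ext v
          simpa using hP.1 v
        subst hfS
        rfl }
  rw [Nat.card_congr hequiv, Nat.card_eq_fintype_card, Fintype.card_sigma]
  apply Finset.sum_congr rfl
  intro S _
  rw [Nat.card_eq_fintype_card]

lemma edcoll_k (k : ℕ) :
    Nat.card {P : T.EDColl // Nat.card {v : T.Leaf // (P.1 v).1 ≠ 0} = k} =
      ∑ S ∈ Finset.powersetCard k (Finset.univ : Finset T.Leaf),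
        Nat.card {P : PFun T // SysProp T S P} := by
  classical
  have hcnt : ∀ P : PFun T,
      Nat.card {v : T.Leaf // (P v).1 ≠ 0} =
        (Finset.univ.filter (fun v => (P v).1 ≠ 0)).card := by
    intro P
    rw [Nat.card_eq_fintype_card, Fintype.card_subtype]
  have hequiv : {P : T.EDColl // Nat.card {v : T.Leaf // (P.1 v).1 ≠ 0} = k} ≃
      Σ S : {S : Finset T.Leaf // S ∈ Finset.powersetCard k (Finset.univ : Finset T.Leaf)},
        {P : PFun T // SysProp T S.1 P} :=
    { toFun := fun x => ⟨⟨Finset.univ.filter (fun v => (x.1.1 v).1 ≠ 0),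
        Finset.mem_powersetCard_univ.mpr (by rw [← hcnt x.1.1]; exact x.2)⟩,
        ⟨x.1.1, ⟨fun v => by simp, x.1.2⟩⟩⟩,
      invFun := fun x => ⟨⟨x.2.1, x.2.2.2⟩, by
        rw [hcnt]
        have hfS : Finset.univ.filter (fun v => (x.2.1 v).1 ≠ 0) = x.1.1 := by
          ext v
          simpa using x.2.2.1 v
        rw [hfS]
        exact Finset.mem_powersetCard_univ.mp x.1.2⟩,
      left_inv := fun x => rfl,
      right_inv := by
        rintro ⟨⟨S, hS⟩, P, hP⟩
        have hfS : Finset.univ.filter (fun v => (P v).1 ≠ 0) = S := by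
          ext v
          simpa using hP.1 v
        subst hfS
        rfl }
  rw [Nat.card_congr hequiv, Nat.card_eq_fintype_card, Fintype.card_sigma]
  rw [← Finset.sum_coe_sort (Finset.powersetCard k (Finset.univ : Finset T.Leaf))
    (fun S => Nat.card {P : PFun T // SysProp T S P})]
  apply Finset.sum_congr rfl
  intro S _
  rw [Nat.card_eq_fintype_card]

end AncAux

/-- Writing `det(xI − C(T)) = Σ_k (−1)^k γ_k(T) x^{n−k}`,
the coefficient `γ_k(T)` counts the edge-disjoint collections of upward paths
in which exactly `k` of the paths are non-trivial; consequently
`det(I + C(T))` is the total number of edge-disjoint collections of upward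
paths. -/
theorem charpoly_coeff_ancMatrix_eq_card_edge_disjoint_collections
    {V : Type} [Fintype V] [DecidableEq V] (T : TreeOn V) :
    (∀ k ≤ Fintype.card T.Leaf,
        T.ancMatrix.charpoly.coeff (Fintype.card T.Leaf - k) =
          (-1 : ℝ) ^ k *
            (Nat.card { P : T.EDColl //
              Nat.card {v : T.Leaf // (P.1 v).1 ≠ 0} = k } : ℝ)) ∧
      (1 + T.ancMatrix).det = (Nat.card T.EDColl : ℝ) := by
  classical
  have hdp := AncAux.det_principal T
  constructor
  · intro k hk
    set nn := Fintype.card T.Leaf with hnn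
    have hchar : T.ancMatrix.charpoly =
        ∑ S : Finset T.Leaf,
          Polynomial.C ((-1 : ℝ) ^ S.card *
              (T.ancMatrix.submatrix (Subtype.val : {v // v ∈ S} → T.Leaf)
                (Subtype.val : {v // v ∈ S} → T.Leaf)).det) *
            Polynomial.X ^ (nn - S.card) := by
      have h0 : T.ancMatrix.charpoly = (T.ancMatrix.charmatrix).det := rfl
      have h1 : T.ancMatrix.charmatrix =
          (Polynomial.X : Polynomial ℝ) • (1 : Matrix T.Leaf T.Leaf (Polynomial ℝ)) +
            (-(T.ancMatrix.map Polynomial.C)) := by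
        ext i j
        by_cases h : i = j
        · subst h
          simp [Matrix.charmatrix_apply_eq, Matrix.one_apply, Matrix.map_apply,
            sub_eq_add_neg]
        · simp [Matrix.charmatrix_apply_ne _ _ _ h, Matrix.one_apply_ne h,
            Matrix.map_apply, h]
      rw [h0, h1, AncAux.det_smul_one_add]
      apply Finset.sum_congr rfl
      intro S _
      have h2 : ((-(T.ancMatrix.map Polynomial.C)).submatrix
            (Subtype.val : {v // v ∈ S} → T.Leaf) (Subtype.val : {v // v ∈ S} → T.Leaf)) =
          -((T.ancMatrix.submatrix (Subtype.val : {v // v ∈ S} → T.Leaf)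
              (Subtype.val : {v // v ∈ S} → T.Leaf)).map Polynomial.C) := by
        ext i j
        simp [Matrix.map_apply]
      rw [h2, Matrix.det_neg, Fintype.card_coe]
      have h3 : ((T.ancMatrix.submatrix (Subtype.val : {v // v ∈ S} → T.Leaf)
            (Subtype.val : {v // v ∈ S} → T.Leaf)).map Polynomial.C).det =
          Polynomial.C ((T.ancMatrix.submatrix (Subtype.val : {v // v ∈ S} → T.Leaf)
            (Subtype.val : {v // v ∈ S} → T.Leaf)).det) := by
        rw [← RingHom.mapMatrix_apply, ← RingHom.map_det]
      rw [h3, _root_.map_mul, map_pow, map_neg, _root_.map_one]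
      ring
    rw [hchar, Polynomial.finset_sum_coeff]
    have hstep : ∀ S : Finset T.Leaf,
        (Polynomial.C ((-1 : ℝ) ^ S.card *
              (T.ancMatrix.submatrix (Subtype.val : {v // v ∈ S} → T.Leaf)
                (Subtype.val : {v // v ∈ S} → T.Leaf)).det) *
            Polynomial.X ^ (nn - S.card)).coeff (nn - k) =
          if S.card = k then
            (-1 : ℝ) ^ k *
              (T.ancMatrix.submatrix (Subtype.val : {v // v ∈ S} → T.Leaf)
                (Subtype.val : {v // v ∈ S} → T.Leaf)).det
          else 0 := by
      intro S
      rw [Polynomial.coeff_C_mul_X_pow]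
      have hc : S.card ≤ nn := Finset.card_le_univ S
      by_cases h : S.card = k
      · rw [if_pos (by omega : nn - k = nn - S.card), if_pos h, h]
      · rw [if_neg (by omega : ¬ nn - k = nn - S.card), if_neg h]
    rw [Finset.sum_congr rfl (fun S _ => hstep S), ← Finset.sum_filter]
    have hpc : Finset.univ.filter (fun S : Finset T.Leaf => S.card = k) =
        Finset.powersetCard k (Finset.univ : Finset T.Leaf) := by
      rw [Finset.powersetCard_eq_filter, Finset.powerset_univ]
    rw [hpc, AncAux.edcoll_k, Nat.cast_sum, Finset.mul_sum]
    apply Finset.sum_congr rfl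
    intro S _
    rw [hdp S]
  · have h1 : (1 + T.ancMatrix) =
        (1 : ℝ) • (1 : Matrix T.Leaf T.Leaf ℝ) + T.ancMatrix := by rw [one_smul]
    rw [h1, AncAux.det_smul_one_add]
    simp only [one_pow, one_mul]
    rw [AncAux.edcoll_total, Nat.cast_sum]
    exact Finset.sum_congr rfl (fun S _ => hdp S)
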